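/- Let H be a graph with at least one edge and let G be a subgraph of H with at least one edge and with matching number ν. Then cms(H) ≤ |E(H)| / ( ⌊(|E(G)| − cms(G))/ν⌋ + 1 ). -/

import Mathlib

open SimpleGraph

/-- Two edges are adjacent if they are distinct and share a vertex. -/
def EdgesAdj {V : Type*} (e e' : Sym2 V) : Prop :=
  e ≠ e' ∧ ∃ v : V, v ∈ e ∧ v ∈ e'

/-- `ms` of an ordering of a graph, the ordering being given as the list of edges
in increasing label order: the largest `s ∈ {1,…,m}` such that any ordered pair of
adjacent edges `(e,e')` with `ℓ(e) < ℓ(e')` has forward distance at least `s`. -/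
noncomputable def msList {V : Type*} (L : List (Sym2 V)) : ℕ :=
  sSup {s | 1 ≤ s ∧ s ≤ L.length ∧ ∀ i j e e', i < j →
    L[i]? = some e → L[j]? = some e' → EdgesAdj e e' → s ≤ j - i}

/-- `cms` of an ordering of a graph: the largest `s ∈ {1,…,m}` such that every pair of
adjacent edges is at cyclic distance at least `s`. -/
noncomputable def cmsList {V : Type*} (L : List (Sym2 V)) : ℕ :=
  sSup {s | 1 ≤ s ∧ s ≤ L.length ∧ ∀ i j e e', i < j →
    L[i]? = some e → L[j]? = some e' → EdgesAdj e e' →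
    s ≤ min (j - i) (L.length - (j - i))}

/-- `L` is an ordering of `G`: it lists every edge of `G` exactly once. -/
def IsOrdering {V : Type*} (G : SimpleGraph V) (L : List (Sym2 V)) : Prop :=
  L.Nodup ∧ ∀ e, e ∈ L ↔ e ∈ G.edgeSet

/-- Cyclic matching sequenceability of a graph: the maximum of `cmsList` over orderings. -/
noncomputable def cms {V : Type*} (G : SimpleGraph V) : ℕ :=
  sSup {k | ∃ L, IsOrdering G L ∧ cmsList L = k}

/-- Number of edges of a graph. -/
noncomputable def numEdges {V : Type*} (G : SimpleGraph V) : ℕ :=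
  Nat.card G.edgeSet

/-- The chromatic index: the least number of colours in a proper edge colouring. -/
noncomputable def chromaticIndex {V : Type*} (G : SimpleGraph V) : ℕ :=
  sInf {c | ∃ f : G.edgeSet → Fin c, ∀ e e' : G.edgeSet, EdgesAdj e.1 e'.1 → f e ≠ f e'}

/-- The edge set of `G` forms a matching (no two distinct edges share a vertex). -/
def IsMatchingGraph {V : Type*} (G : SimpleGraph V) : Prop :=
  ∀ e ∈ G.edgeSet, ∀ e' ∈ G.edgeSet, ¬ EdgesAdj e e'

/-- `G` is regular of degree `d`. -/
def IsRegularGraph {V : Type*} (G : SimpleGraph V) (d : ℕ) : Prop :=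
  ∀ v : V, Nat.card (G.neighborSet v) = d

/-- A finite set of edges of `G` forming a matching. -/
def IsMatchingSet {V : Type*} (G : SimpleGraph V) (M : Finset (Sym2 V)) : Prop :=
  ↑M ⊆ G.edgeSet ∧ ∀ e ∈ M, ∀ e' ∈ M, ¬ EdgesAdj e e'

/-- The matching number of a graph. -/
noncomputable def matchingNumber {V : Type*} (G : SimpleGraph V) : ℕ :=
  sSup {k | ∃ M : Finset (Sym2 V), IsMatchingSet G M ∧ M.card = k}

section Auxiliary

variable {V : Type*}

private lemma edgesAdj_symm {e e' : Sym2 V} (h : EdgesAdj e e') : EdgesAdj e' e := by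
  obtain ⟨hne, v, hv, hv'⟩ := h
  exact ⟨hne.symm, v, hv', hv⟩

private lemma nat_sSup_le {S : Set ℕ} {n : ℕ} (h : ∀ k ∈ S, k ≤ n) : sSup S ≤ n := by
  rcases S.eq_empty_or_nonempty with rfl | hS
  · simp
  · exact csSup_le hS h

private lemma cmsList_le_length (L : List (Sym2 V)) : cmsList L ≤ L.length :=
  nat_sSup_le fun _ hk => hk.2.1

private lemma countP_take_mono {α : Type*} (p : α → Bool) (L : List α) {a b : ℕ} (h : a ≤ b) :
    (L.take a).countP p ≤ (L.take b).countP p := by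
  have h1 : L.take a = (L.take b).take a := by rw [List.take_take, Nat.min_eq_left h]
  rw [h1]
  exact List.Sublist.countP_le (p := p) (List.take_sublist _ _)

private lemma exists_index_filter {α : Type*} (p : α → Bool) (L : List α) :
    ∀ (i : ℕ), i < (L.filter p).length →
      ∃ n, ∃ hn : n < L.length, (L.filter p)[i]? = some (L[n]) ∧ p L[n] = true ∧
        (L.take n).countP p = i ∧ (L.take (n+1)).countP p = i + 1 := by
  induction L with
  | nil => intro i hi; simp at hi
  | cons a t ih =>
    intro i hi
    by_cases hpa : p a
    · rw [List.filter_cons_of_pos hpa] at hi ⊢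
      cases i with
      | zero =>
        refine ⟨0, by simp, by simp, hpa, by simp, ?_⟩
        simp [hpa]
      | succ i =>
        obtain ⟨n, hn, h1, h2, h3, h4⟩ := ih i (by simpa using hi)
        refine ⟨n+1, by simpa using hn, by simpa using h1, by simpa using h2, ?_, ?_⟩
        · show ((a :: t).take (n+1)).countP p = i + 1
          rw [List.take_succ_cons, List.countP_cons, h3, hpa]
          simp
        · show ((a :: t).take (n+1+1)).countP p = i + 1 + 1
          rw [List.take_succ_cons, List.countP_cons, h4, hpa]
          simp
    · rw [List.filter_cons_of_neg (by simpa using hpa)] at hi ⊢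
      obtain ⟨n, hn, h1, h2, h3, h4⟩ := ih i hi
      refine ⟨n+1, by simpa using hn, by simpa using h1, by simpa using h2, ?_, ?_⟩
      · show ((a :: t).take (n+1)).countP p = i
        rw [List.take_succ_cons, List.countP_cons, h3]
        simp [hpa]
      · show ((a :: t).take (n+1+1)).countP p = i + 1
        rw [List.take_succ_cons, List.countP_cons, h4]
        simp [hpa]

variable [Fintype V]

private lemma length_of_isOrdering {G : SimpleGraph V} {L : List (Sym2 V)} (h : IsOrdering G L) :
    L.length = numEdges G := by
  classical
  have hfin : G.edgeSet.Finite := Set.toFinite _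
  have h1 : L.toFinset = hfin.toFinset := by
    ext e
    rw [List.mem_toFinset, Set.Finite.mem_toFinset, h.2 e]
  have h2 := List.toFinset_card_of_nodup h.1
  show L.length = Nat.card G.edgeSet
  rw [Nat.card_coe_set_eq, Set.ncard_eq_toFinset_card _ hfin, ← h1, h2]

private lemma exists_isOrdering (G : SimpleGraph V) : ∃ L, IsOrdering G L := by
  classical
  refine ⟨(Set.toFinite G.edgeSet).toFinset.toList, Finset.nodup_toList _, fun e => ?_⟩
  rw [Finset.mem_toList, Set.Finite.mem_toFinset]

private lemma bddAbove_cms_set (G : SimpleGraph V) :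
    BddAbove {k | ∃ L, IsOrdering G L ∧ cmsList L = k} := by
  refine ⟨numEdges G, ?_⟩
  rintro k ⟨L, hL, rfl⟩
  exact (cmsList_le_length L).trans_eq (length_of_isOrdering hL)

private lemma exists_optimal_ordering (G : SimpleGraph V) :
    ∃ L, IsOrdering G L ∧ cmsList L = cms G := by
  have hne : {k | ∃ L, IsOrdering G L ∧ cmsList L = k}.Nonempty :=
    (exists_isOrdering G).elim fun L hL => ⟨cmsList L, L, hL, rfl⟩
  exact Nat.sSup_mem hne (bddAbove_cms_set G)

private lemma cmsList_spec (L : List (Sym2 V)) (hL : L ≠ []) :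
    1 ≤ cmsList L ∧ cmsList L ≤ L.length ∧ ∀ i j e e', i < j →
      L[i]? = some e → L[j]? = some e' → EdgesAdj e e' →
      cmsList L ≤ min (j - i) (L.length - (j - i)) := by
  have hone : (1 : ℕ) ∈ {s | 1 ≤ s ∧ s ≤ L.length ∧ ∀ i j e e', i < j →
      L[i]? = some e → L[j]? = some e' → EdgesAdj e e' →
      s ≤ min (j - i) (L.length - (j - i))} := by
    refine ⟨le_refl 1, List.length_pos_iff.mpr hL, ?_⟩
    intro i j e e' hij hi hj _
    have hj' : j < L.length := (List.getElem?_eq_some_iff.mp hj).1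
    omega
  have := Nat.sSup_mem ⟨1, hone⟩ (⟨L.length, fun k hk => hk.2.1⟩ : BddAbove _)
  exact this

private lemma matchingSet_card_le (G : SimpleGraph V) (M : Finset (Sym2 V))
    (hM : IsMatchingSet G M) : M.card ≤ matchingNumber G := by
  classical
  have hbdd : BddAbove {k | ∃ M : Finset (Sym2 V), IsMatchingSet G M ∧ M.card = k} := by
    refine ⟨(Set.toFinite G.edgeSet).toFinset.card, ?_⟩
    rintro k ⟨M', hM', rfl⟩
    exact Finset.card_le_card fun e he => (Set.Finite.mem_toFinset _).2 (hM'.1 he)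
  exact le_csSup hbdd ⟨M, hM, rfl⟩

private lemma one_le_matchingNumber (G : SimpleGraph V) (hG : G.edgeSet.Nonempty) :
    1 ≤ matchingNumber G := by
  classical
  obtain ⟨e, he⟩ := hG
  have h1 : IsMatchingSet G {e} := by
    constructor
    · intro x hx
      simp only [Finset.coe_singleton, Set.mem_singleton_iff] at hx
      subst hx; exact he
    · intro f hf f' hf' hadj
      simp only [Finset.mem_singleton] at hf hf'
      subst hf; subst hf'
      exact hadj.1 rfl
  simpa using matchingSet_card_le G {e} h1

private lemma window_countP_le (G : SimpleGraph V) (ν : ℕ)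
    (hν : ∀ M : Finset (Sym2 V), IsMatchingSet G M → M.card ≤ ν)
    (p : Sym2 V → Bool) (hp : ∀ e, p e = true → e ∈ G.edgeSet)
    (L : List (Sym2 V)) (hL : L.Nodup) (s : ℕ) (hs1 : 1 ≤ s) (hsm : s ≤ L.length)
    (hdist : ∀ i j e e', i < j → L[i]? = some e → L[j]? = some e' → EdgesAdj e e' →
      s ≤ min (j - i) (L.length - (j - i)))
    (a : ℕ) (ha : a + s ≤ 2 * L.length) :
    (((L ++ L).drop a).take s).countP p ≤ ν := by
  classical
  have hlen2 : (L ++ L).length = 2 * L.length := by simp [two_mul]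
  set W := ((L ++ L).drop a).take s with hWdef
  have hWlen : W.length ≤ s := by
    simp only [hWdef, List.length_take]
    omega
  have hWget : ∀ u (hu : u < W.length), W[u] = (L ++ L)[a + u]'(by
      simp only [hWdef, List.length_take, List.length_drop] at hu; omega) := by
    intro u hu
    simp only [hWdef, List.getElem_take, List.getElem_drop]
  have hLnadj : ∀ i j (hi : i < L.length) (hj : j < L.length), i < j →
      (j - i < s ∨ L.length - (j - i) < s) →
      L[i] ≠ L[j] ∧ ¬ EdgesAdj L[i] L[j] ∧ ¬ EdgesAdj L[j] L[i] := by
    intro i j hi hj hij hlt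
    have hne : L[i] ≠ L[j] := by
      intro hEq
      have : i = j := (List.Nodup.getElem_inj_iff hL).mp hEq
      omega
    refine ⟨hne, ?_, ?_⟩
    · intro hadj
      have h := hdist i j L[i] L[j] hij (List.getElem?_eq_getElem hi)
        (List.getElem?_eq_getElem hj) hadj
      obtain ⟨h1, h2⟩ := le_min_iff.mp h
      omega
    · intro hadj
      have h := hdist i j L[i] L[j] hij (List.getElem?_eq_getElem hi)
        (List.getElem?_eq_getElem hj) (edgesAdj_symm hadj)
      obtain ⟨h1, h2⟩ := le_min_iff.mp h
      omega
  have hkey : ∀ u v (hu : u < W.length) (hv : v < W.length), u < v →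
      W[u] ≠ W[v] ∧ ¬ EdgesAdj W[u] W[v] ∧ ¬ EdgesAdj W[v] W[u] := by
    intro u v hu hv huv
    rw [hWget u hu, hWget v hv]
    have hvs : v < s := lt_of_lt_of_le hv hWlen
    have hy2 : a + v < 2 * L.length := by omega
    by_cases hym : a + v < L.length
    · have hxm : a + u < L.length := by omega
      rw [List.getElem_append_left hxm, List.getElem_append_left hym]
      have h := hLnadj (a+u) (a+v) hxm hym (by omega) (Or.inl (by omega))
      exact ⟨h.1, h.2.1, h.2.2⟩
    · by_cases hxm : a + u < L.length
      · rw [List.getElem_append_left hxm, List.getElem_append_right (by omega : L.length ≤ a + v)]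
        have h := hLnadj (a + v - L.length) (a + u) (by omega) hxm (by omega)
          (Or.inr (by omega))
        exact ⟨fun hEq => h.1 hEq.symm, fun hadj => h.2.2 hadj, fun hadj => h.2.1 hadj⟩
      · rw [List.getElem_append_right (by omega : L.length ≤ a + u),
          List.getElem_append_right (by omega : L.length ≤ a + v)]
        have h := hLnadj (a + u - L.length) (a + v - L.length) (by omega) (by omega)
          (by omega) (Or.inl (by omega))
        exact ⟨h.1, h.2.1, h.2.2⟩
  have hWnodup : W.Nodup := by
    have : W.Pairwise (· ≠ ·) :=
      List.pairwise_iff_getElem.mpr (fun i j hi hj hij => (hkey i j hi hj hij).1)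
    exact this
  have hFnodup : (W.filter p).Nodup := hWnodup.filter p
  have hFcard : (W.filter p).toFinset.card = (W.filter p).length :=
    List.toFinset_card_of_nodup hFnodup
  have hMatch : IsMatchingSet G (W.filter p).toFinset := by
    constructor
    · intro e he
      rw [Finset.mem_coe, List.mem_toFinset] at he
      exact hp e (List.of_mem_filter he)
    · intro e he e' he' hadj
      rw [List.mem_toFinset] at he he'
      have heW : e ∈ W := List.mem_of_mem_filter he
      have heW' : e' ∈ W := List.mem_of_mem_filter he'
      obtain ⟨u, hu, rfl⟩ := List.mem_iff_getElem.mp heW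
      obtain ⟨v, hv, rfl⟩ := List.mem_iff_getElem.mp heW'
      rcases lt_trichotomy u v with h | rfl | h
      · exact (hkey u v hu hv h).2.1 hadj
      · exact hadj.1 rfl
      · exact (hkey v u hv hu h).2.2 hadj
  calc W.countP p = (W.filter p).length := List.countP_eq_length_filter
    _ = (W.filter p).toFinset.card := hFcard.symm
    _ ≤ ν := hν _ hMatch

private lemma windows_countP_le {α : Type*} (p : α → Bool) (L2 : List α) (s ν : ℕ)
    (hwin : ∀ a, a + s ≤ L2.length → ((L2.drop a).take s).countP p ≤ ν) :
    ∀ n a, a + n * s ≤ L2.length → ((L2.drop a).take (n * s)).countP p ≤ n * ν := by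
  intro n
  induction n with
  | zero => intro a ha; simp
  | succ n ih =>
    intro a ha
    have h1 : (n + 1) * s = s + n * s := by ring
    have h2 : (n + 1) * ν = ν + n * ν := by ring
    rw [h1] at ha
    rw [h1, h2, List.take_add, List.countP_append, List.drop_drop]
    exact Nat.add_le_add (hwin a (by omega)) (ih (a + s) (by omega))

end Auxiliary

/-- Lemma: for a graph `H` and a subgraph `G` of `H` with matching number `ν`,
`cms(H) ≤ |E(H)| / (⌊(|E(G)| - cms(G))/ν⌋ + 1)`. -/
theorem cms_le_div_floor {V : Type*} [Fintype V] (H G : SimpleGraph V)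
    (hsub : G ≤ H) (hH : H.edgeSet.Nonempty) (hG : G.edgeSet.Nonempty) :
    (cms H : ℝ) ≤ (numEdges H : ℝ) /
      (((numEdges G - cms G) / matchingNumber G + 1 : ℕ) : ℝ) := by
  classical
  obtain ⟨L, hLord, hLcms⟩ := exists_optimal_ordering H
  have hLlen : L.length = numEdges H := length_of_isOrdering hLord
  have hLne : L ≠ [] := by
    obtain ⟨e, he⟩ := hH
    intro h
    rw [h] at hLord
    exact List.not_mem_nil ((hLord.2 e).2 he)
  obtain ⟨hs1, hsm, hsdist⟩ := cmsList_spec L hLne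
  set s := cmsList L with hsdef
  set m := L.length with hmdef
  set ν := matchingNumber G with hνdef
  have hν1 : 1 ≤ ν := one_le_matchingNumber G hG
  set p : Sym2 V → Bool := fun e => decide (e ∈ G.edgeSet) with hpdef
  have hp : ∀ e, p e = true ↔ e ∈ G.edgeSet := by intro e; simp [hpdef]
  set F := L.filter p with hFdef
  have hFord : IsOrdering G F := by
    refine ⟨hLord.1.filter p, fun e => ?_⟩
    rw [hFdef, List.mem_filter, hLord.2 e]
    constructor
    · rintro ⟨_, h2⟩; exact (hp e).1 h2
    · intro h
      exact ⟨SimpleGraph.edgeSet_mono hsub h, (hp e).2 h⟩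
  have hFlen : F.length = numEdges G := length_of_isOrdering hFord
  have hFne : F ≠ [] := by
    obtain ⟨e, he⟩ := hG
    intro h
    rw [h] at hFord
    exact List.not_mem_nil ((hFord.2 e).2 he)
  have hmG1 : 1 ≤ F.length := List.length_pos_iff.mpr hFne
  obtain ⟨q, hqdef⟩ : ∃ x, m / s = x := ⟨_, rfl⟩
  obtain ⟨r, hrdef⟩ : ∃ x, m % s = x := ⟨_, rfl⟩
  have hq1 : 1 ≤ q := hqdef ▸ Nat.div_pos hsm (by omega)
  have hqs1 : s * q + r = m := by rw [← hqdef, ← hrdef]; exact Nat.div_add_mod m s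
  have hqs2 : q * s = s * q := mul_comm q s
  have hmod : r < s := hrdef ▸ Nat.mod_lt m (by omega)
  have hlen2 : (L ++ L).length = 2 * m := by
    simp only [List.length_append]
    omega
  have hwin1 : ∀ a, a + s ≤ (L ++ L).length → (((L ++ L).drop a).take s).countP p ≤ ν := by
    intro a ha
    refine window_countP_le G ν (fun M hM => matchingSet_card_le G M hM) p
      (fun e he => (hp e).1 he) L hLord.1 s hs1 hsm hsdist a ?_
    omega
  have hwink : ∀ a k, a + q * s ≤ (L ++ L).length → k ≤ q * s →
      (((L ++ L).drop a).take k).countP p ≤ q * ν := by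
    intro a k ha hk
    have h1 : ((L ++ L).drop a).take k = (((L ++ L).drop a).take (q * s)).take k := by
      rw [List.take_take, Nat.min_eq_left hk]
    rw [h1]
    exact (List.Sublist.countP_le (p := p) (List.take_sublist _ _)).trans
      (windows_countP_le p (L ++ L) s ν hwin1 q a ha)
  -- key inequality
  have hqν1 : 0 < q * ν := Nat.mul_pos hq1 hν1
  have hkey : numEdges G + 1 ≤ q * ν + cms G := by
    by_cases hcase : numEdges G + 1 ≤ q * ν
    · omega
    · obtain ⟨c, hcdef⟩ : ∃ x, numEdges G + 1 - q * ν = x := ⟨_, rfl⟩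
      have hc1 : 1 ≤ c := by omega
      have hcmem : c ∈ {s' | 1 ≤ s' ∧ s' ≤ F.length ∧ ∀ i j e e', i < j →
          F[i]? = some e → F[j]? = some e' → EdgesAdj e e' →
          s' ≤ min (j - i) (F.length - (j - i))} := by
        refine ⟨hc1, by omega, ?_⟩
        intro i j e e' hij hi hj hadj
        have hjF : j < F.length := (List.getElem?_eq_some_iff.mp hj).1
        obtain ⟨n1, hn1, hg1, hp1, hc1a, hc1b⟩ := exists_index_filter p L i
          (by rw [← hFdef]; omega)
        obtain ⟨n2, hn2, hg2, hp2, hc2a, hc2b⟩ := exists_index_filter p L j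
          (by rw [← hFdef]; omega)
        rw [← hFdef] at hg1 hg2
        have he1 : e = L[n1] := Option.some.inj (hi.symm.trans hg1)
        have he2 : e' = L[n2] := Option.some.inj (hj.symm.trans hg2)
        have hn12 : n1 < n2 := by
          by_contra hcon
          have := countP_take_mono p L (by omega : n2 ≤ n1)
          omega
        have hadjL : EdgesAdj L[n1] L[n2] := by
          rw [he1, he2] at hadj
          exact hadj
        have hmin := hsdist n1 n2 L[n1] L[n2] hn12 (List.getElem?_eq_getElem hn1)
          (List.getElem?_eq_getElem hn2) hadjL
        obtain ⟨hsD, hsD'⟩ := le_min_iff.mp hmin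
        -- forward interval
        have hA : i + ((L.drop n1).take (n2 - n1 + 1)).countP p = j + 1 := by
          have he : L.take (n2 + 1) = L.take n1 ++ (L.drop n1).take (n2 - n1 + 1) := by
            have h' : n2 + 1 = n1 + (n2 - n1 + 1) := by omega
            rw [h', List.take_add]
          have h2 := hc2b
          rw [he, List.countP_append, hc1a] at h2
          omega
        have htakeA : (((L ++ L)).drop n1).take (n2 - n1 + 1) = (L.drop n1).take (n2 - n1 + 1) := by
          rw [List.drop_append_of_le_length (by omega), List.take_append_of_le_length]
          simp only [List.length_drop]
          omega
        have hb1 : ((L.drop n1).take (n2 - n1 + 1)).countP p ≤ q * ν := by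
          rw [← htakeA]
          exact hwink n1 (n2 - n1 + 1) (by omega) (by omega)
        -- backward interval
        have hcountL : L.countP p = numEdges G := by
          rw [List.countP_eq_length_filter, ← hFdef, hFlen]
        have hsplit : (L.take n2).countP p + (L.drop n2).countP p = numEdges G := by
          rw [← List.countP_append, List.take_append_drop, hcountL]
        have htakeB : ((L ++ L).drop n2).take (m - (n2 - n1) + 1) =
            L.drop n2 ++ L.take (n1 + 1) := by
          rw [List.drop_append_of_le_length (by omega)]
          have h' : m - (n2 - n1) + 1 = (L.drop n2).length + (n1 + 1) := by
            simp only [List.length_drop]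
            omega
          rw [h', List.take_append]
          rw [List.take_of_length_le (by omega), Nat.add_sub_cancel_left]
        have hB : (((L ++ L).drop n2).take (m - (n2 - n1) + 1)).countP p + j =
            numEdges G + i + 1 := by
          rw [htakeB, List.countP_append, hc1b]
          omega
        have hb2 : (((L ++ L).drop n2).take (m - (n2 - n1) + 1)).countP p ≤ q * ν :=
          hwink n2 (m - (n2 - n1) + 1) (by omega) (by omega)
        refine le_min (by omega) (by omega)
      have h1 : c ≤ cmsList F := by
        unfold cmsList
        exact le_csSup ⟨F.length, fun k hk => hk.2.1⟩ hcmem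
      have h2 : cmsList F ≤ cms G := by
        unfold cms
        exact le_csSup (bddAbove_cms_set G) ⟨F, hFord, rfl⟩
      omega
  -- final arithmetic
  obtain ⟨w, hwdef⟩ : ∃ x, (numEdges G - cms G) / ν = x := ⟨_, rfl⟩
  have hdiv : w < q := by
    rw [← hwdef, Nat.div_lt_iff_lt_mul (by omega : 0 < ν)]
    omega
  have hst : s * (w + 1) ≤ m := by
    have h3 : s * (w + 1) ≤ s * q := Nat.mul_le_mul_left s (by omega)
    omega
  rw [← hLcms, ← hLlen, hwdef]
  have ht0 : (0 : ℝ) < ((w + 1 : ℕ) : ℝ) := by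
    exact_mod_cast Nat.succ_pos w
  rw [le_div_iff₀ ht0]
  exact_mod_cast hst
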